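/- Let α₁ ∈ ℝ, α₂ > 0, ε > 0 and 0 < β < 8 + ε. Then the function h₁ : ℝ → ℝ, y ↦ Re(Q(iy)), has precisely 2 positive roots ȳ₀, ȳ₁ with 0 < ȳ₀ < ȳ₁; moreover h₁(y) > 0 for 0 ≤ y < ȳ₀, h₁(ȳ₀) = 0, h₁(y) < 0 for ȳ₀ < y < ȳ₁, h₁(ȳ₁) = 0, and h₁(y) > 0 for y > ȳ₁. -/

import Mathlib

noncomputable def Q (a1 a2 e b : ℝ) (z : ℂ) : ℂ :=
  z ^ 4
    + (4 * z / ((b : ℂ) + (e : ℂ)))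
        * (((2 : ℂ) + (e : ℂ)) * (z ^ 2 + 1) + ((a1 : ℂ) - Complex.I * (a2 : ℂ)) * (z ^ 2 - 1))
    + 2 * (((16 : ℂ) - (b : ℂ) + 3 * (e : ℂ)) / ((b : ℂ) + (e : ℂ))) * z ^ 2 + 1

lemma re_Q (a1 a2 e b y : ℝ) (hbe : b + e ≠ 0) :
    (Q a1 a2 e b (Complex.I * (y : ℂ))).re
      = y^4 - 2*((16 - b + 3*e)/(b+e))*y^2 + 1 - (4*a2/(b+e))*y*(y^2+1) := by
  have h1 : ((b:ℂ) + e) = ((b + e : ℝ) : ℂ) := by push_cast; ring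
  have h2 : (16 - (b:ℂ) + 3*e) = ((16 - b + 3*e : ℝ) : ℂ) := by push_cast; ring
  simp only [Q, h1, h2, div_eq_mul_inv, ← Complex.ofReal_inv]
  simp only [Complex.ext_iff, Complex.mul_re, Complex.mul_im, Complex.add_re, Complex.add_im,
    pow_succ, pow_zero, Complex.one_re, Complex.I_re, Complex.I_im, Complex.ofReal_re,
    Complex.ofReal_im, Complex.sub_re, Complex.sub_im, Complex.one_im, Complex.re_ofNat, Complex.im_ofNat]
  field_simp
  ring

/-- For `α₂ > 0`, `ε > 0` and `0 < β < 8 + ε`, the map `h₁ : y ↦ Re(Q(iy))` has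
precisely 2 positive roots `ȳ₀ < ȳ₁`, and is positive on `[0, ȳ₀)`, negative on
`(ȳ₀, ȳ₁)` and positive on `(ȳ₁, ∞)`. -/
theorem stmt_14 (a1 a2 e b : ℝ) (ha2 : 0 < a2) (he : 0 < e)
    (hb₁ : 0 < b) (hb₂ : b < 8 + e) :
    ∃ y₀ y₁ : ℝ, 0 < y₀ ∧ y₀ < y₁ ∧
      (Q a1 a2 e b (Complex.I * (y₀ : ℂ))).re = 0 ∧
      (Q a1 a2 e b (Complex.I * (y₁ : ℂ))).re = 0 ∧
      (∀ y : ℝ, 0 < y → (Q a1 a2 e b (Complex.I * (y : ℂ))).re = 0 → y = y₀ ∨ y = y₁) ∧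
      (∀ y : ℝ, 0 ≤ y → y < y₀ → 0 < (Q a1 a2 e b (Complex.I * (y : ℂ))).re) ∧
      (∀ y : ℝ, y₀ < y → y < y₁ → (Q a1 a2 e b (Complex.I * (y : ℂ))).re < 0) ∧
      (∀ y : ℝ, y₁ < y → 0 < (Q a1 a2 e b (Complex.I * (y : ℂ))).re) := by
  have hbe : (0:ℝ) < b + e := by linarith
  have hbe' : b + e ≠ 0 := ne_of_gt hbe
  obtain ⟨c, hc⟩ : ∃ c : ℝ, c = (16 - b + 3*e)/(b+e) := ⟨_, rfl⟩
  obtain ⟨d, hd⟩ : ∃ d : ℝ, d = 4*a2/(b+e) := ⟨_, rfl⟩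
  have hre : ∀ y : ℝ, (Q a1 a2 e b (Complex.I * (y : ℂ))).re
      = y^4 - 2*c*y^2 + 1 - d*y*(y^2+1) := by
    intro y; rw [re_Q a1 a2 e b y hbe', hc, hd]
  have hd0 : 0 < d := by rw [hd]; positivity
  have hc1 : 1 < c := by rw [hc, lt_div_iff₀ hbe]; linarith
  clear hc hd
  obtain ⟨s, hsnn, hs2⟩ : ∃ s : ℝ, 0 ≤ s ∧ s^2 = d^2 + 8*c + 8 :=
    ⟨Real.sqrt (d^2 + 8*c + 8), Real.sqrt_nonneg _, Real.sq_sqrt (by nlinarith)⟩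
  obtain ⟨t, ht⟩ : ∃ t : ℝ, t = (d + s)/2 := ⟨_, rfl⟩
  have ht_eq : t^2 - d*t = 2*c + 2 := by rw [ht]; nlinarith [hs2]
  have ht2 : 2 < t := by rw [ht]; nlinarith [hs2, sq_nonneg (s - (4 - d))]
  have htd : d < t := by rw [ht]; nlinarith [hs2, sq_nonneg (s - d)]
  clear ht hs2 hsnn
  obtain ⟨u, hunn, hu2⟩ : ∃ u : ℝ, 0 ≤ u ∧ u^2 = t^2 - 4 :=
    ⟨Real.sqrt (t^2 - 4), Real.sqrt_nonneg _, Real.sq_sqrt (by nlinarith)⟩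
  have hu0 : 0 < u := by nlinarith
  have hut : u < t := by nlinarith
  have hfac : ∀ y : ℝ, y^4 - 2*c*y^2 + 1 - d*y*(y^2+1)
      = (y^2 + (t-d)*y + 1) * ((y - (t-u)/2) * (y - (t+u)/2)) := by
    intro y
    linear_combination (y^2 + (t-d)*y + 1) * ((1:ℝ)/4) * hu2 + (y^2) * ht_eq
  refine ⟨(t - u)/2, (t + u)/2, by linarith, by linarith, ?_, ?_, ?_, ?_, ?_, ?_⟩
  · rw [hre, hfac]; ring
  · rw [hre, hfac]; ring
  · intro y hy h0
    rw [hre, hfac] at h0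
    have hpos : 0 < y^2 + (t-d)*y + 1 := by nlinarith
    rcases mul_eq_zero.1 h0 with h | h
    · exact absurd h (ne_of_gt hpos)
    · rcases mul_eq_zero.1 h with h | h
      · left; linarith [sub_eq_zero.1 h]
      · right; linarith [sub_eq_zero.1 h]
  · intro y hy hlt
    rw [hre, hfac]
    have hpos : 0 < y^2 + (t-d)*y + 1 := by nlinarith
    exact mul_pos hpos (mul_pos_of_neg_of_neg (by linarith) (by linarith))
  · intro y hy hlt
    rw [hre, hfac]
    have hy0 : 0 < y := by linarith
    have hpos : 0 < y^2 + (t-d)*y + 1 := by nlinarith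
    exact mul_neg_of_pos_of_neg hpos (mul_neg_of_pos_of_neg (by linarith) (by linarith))
  · intro y hy
    rw [hre, hfac]
    have hy0 : 0 < y := by linarith
    have hpos : 0 < y^2 + (t-d)*y + 1 := by nlinarith
    exact mul_pos hpos (mul_pos (by linarith) (by linarith))
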